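/- Let η_V > 0, η_S > 0, α ∈ [0,1], ρ < 0, μ < 0 with η_V ≠ η_S |ρ|. Define for x ∈ ℝ and y ≥ 0 the joint density p^C(x,y) = η_V e^{-η_V y} · ( α η_S e^{-η_S (x - μ - ρ y)} 1_{x - μ - ρ y ≥ 0} + (1-α) η_S e^{η_S (x - μ - ρ y)} 1_{x - μ - ρ y < 0} ). Let 0 < K < S₀ e^{μ}, and set k = log(K/S₀), so that k < μ < 0. Then ∫_{ℝ} ∫₀^∞ (K - S₀ e^x)^+ p^C(x,y) dy dx = c_{1L} · S₀ e^{(η_V/|ρ| + 1)k} / (η_V/|ρ| + 1) + c_{2L} · S₀ e^{(η_S + 1)k} / (η_S + 1), where c_{1L} = α (η_S |ρ| / (η_V + η_S |ρ|)) e^{-(η_V/|ρ|) μ} - (1-α) (η_S |ρ| / (η_V - η_S |ρ|)) e^{-(η_V/|ρ|) μ} and c_{2L} = (1-α) (η_V / (η_V - η_S |ρ|)) e^{-η_S μ}. -/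

import Mathlib

open MeasureTheory

/-- The joint density of the common jumps in the Kou-type model. -/
noncomputable def pC (ηV ηS α μ ρ : ℝ) (x y : ℝ) : ℝ :=
  ηV * Real.exp (-ηV * y) *
    (if 0 ≤ x - μ - ρ * y then α * (ηS * Real.exp (-ηS * (x - μ - ρ * y)))
     else (1 - α) * (ηS * Real.exp (ηS * (x - μ - ρ * y))))

section Helpers
open Set Filter


lemma expMul_hasDerivAt (c x : ℝ) (hc : c ≠ 0) :
    HasDerivAt (fun y => Real.exp (c * y) / c) (Real.exp (c * x)) x := by
  have h : HasDerivAt (fun y : ℝ => c * y) c x := by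
    simpa using (hasDerivAt_id x).const_mul c
  have h2 := ((Real.hasDerivAt_exp (c * x)).comp x h).div_const c
  simpa [mul_div_cancel_right₀ _ hc] using h2

lemma integral_exp_mul_ab (c a b : ℝ) (hc : c ≠ 0) :
    ∫ x in a..b, Real.exp (c * x) = (Real.exp (c * b) - Real.exp (c * a)) / c := by
  have := intervalIntegral.integral_eq_sub_of_hasDerivAt
    (f := fun y => Real.exp (c * y) / c) (f' := fun y => Real.exp (c * y))
    (fun x _ => expMul_hasDerivAt c x hc)
    ((Real.continuous_exp.comp (continuous_const.mul continuous_id)).intervalIntegrable a b)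
  rw [this]; ring

lemma integral_exp_neg_mul_Ioi {c : ℝ} (hc : 0 < c) (t : ℝ) :
    ∫ x in Set.Ioi t, Real.exp (-(c * x)) = Real.exp (-(c * t)) / c := by
  have h2 := integral_comp_mul_left_Ioi (fun x => Real.exp (-x)) t hc
  simp only [smul_eq_mul] at h2
  rw [h2, integral_exp_neg_Ioi]
  ring

lemma integrableOn_exp_neg_mul_Ioi {c : ℝ} (hc : 0 < c) (t : ℝ) :
    IntegrableOn (fun x => Real.exp (-(c * x))) (Set.Ioi t) := by
  simpa [neg_mul] using exp_neg_integrableOn_Ioi t hc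

lemma integrableOn_exp_mul_Iic' {c : ℝ} (hc : 0 < c) (t : ℝ) :
    IntegrableOn (fun x => Real.exp (c * x)) (Set.Iic t) := by
  refine integrableOn_Iic_of_intervalIntegral_norm_bounded (Real.exp (c * t) / c) t
    (fun y => (Real.continuous_exp.comp (continuous_const.mul continuous_id)).integrableOn_Ioc)
    tendsto_id ?_
  filter_upwards [eventually_le_atBot t] with y hy
  simp only [Real.norm_eq_abs, abs_of_pos (Real.exp_pos _)]
  rw [show id y = y from rfl, integral_exp_mul_ab c y t hc.ne']
  have h1 : Real.exp (c * y) ≤ Real.exp (c * t) := by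
    apply Real.exp_le_exp.mpr; nlinarith
  have h2 : (0:ℝ) < Real.exp (c * t) := Real.exp_pos _
  rw [div_le_div_iff₀ hc hc]
  nlinarith [Real.exp_pos (c * y)]

lemma integral_exp_mul_Iic' {c : ℝ} (hc : 0 < c) (t : ℝ) :
    ∫ x in Set.Iic t, Real.exp (c * x) = Real.exp (c * t) / c := by
  have h1 : ∫ x in Set.Ioi (-t), Real.exp (c * (-x)) = ∫ x in Set.Iic t, Real.exp (c * x) := by
    simpa using integral_comp_neg_Ioi (-t) (fun x => Real.exp (c * x))
  rw [← h1]
  simp only [mul_neg, ← neg_mul, neg_mul]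
  have := integral_exp_neg_mul_Ioi hc (-t)
  rw [this]
  rw [show -(c * -t) = c * t by ring]

lemma inner_integral (ηV ηS α μ ρ : ℝ) (hηV : 0 < ηV) (hηS : 0 < ηS)
    (hρ : ρ < 0) (hne : ηV ≠ ηS * (-ρ)) (x : ℝ) (hx : x < μ) :
    ∫ y in Set.Ioi (0:ℝ), pC ηV ηS α μ ρ x y
      = (α * ηS * ηV / (ηV + ηS * (-ρ)) + (1 - α) * ηS * ηV / (ηS * (-ρ) - ηV))
          * Real.exp (ηV / (-ρ) * (x - μ))
        + ((1 - α) * ηS * ηV / (ηV - ηS * (-ρ))) * Real.exp (ηS * (x - μ)) := by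
  set r : ℝ := -ρ with hrdef
  have hr : 0 < r := by simp [hrdef]; linarith
  have hρr : ρ = -r := by simp [hrdef]
  set y₀ : ℝ := (μ - x) / r with hy₀def
  have hy₀ : 0 < y₀ := div_pos (by linarith) hr
  set d : ℝ := ηS * r - ηV with hddef
  have hd : d ≠ 0 := by
    intro h; apply hne; linarith [hddef ▸ h]
  set e : ℝ := ηV + ηS * r with hedef
  have he : 0 < e := by have := mul_pos hηS hr; simp [hedef]; linarith
  set C1 : ℝ := (1 - α) * ηS * ηV * Real.exp (ηS * (x - μ)) with hC1def
  set C2 : ℝ := α * ηS * ηV * Real.exp (-(ηS * (x - μ))) with hC2def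
  set f₁ : ℝ → ℝ := fun y => C1 * Real.exp (d * y) with hf₁def
  set f₂ : ℝ → ℝ := fun y => C2 * Real.exp (-(e * y)) with hf₂def
  -- key algebraic facts
  have harg : ∀ y : ℝ, x - μ - ρ * y = r * (y - y₀) := by
    intro y; rw [hρr, hy₀def]; field_simp; ring
  have hEq1 : Set.EqOn (pC ηV ηS α μ ρ x) f₁ (Set.Ioo 0 y₀) := by
    intro y hy
    have hylt : y < y₀ := hy.2
    have hneg : ¬ (0 ≤ x - μ - ρ * y) := by
      rw [harg y]; push_neg
      exact mul_neg_of_pos_of_neg hr (by linarith)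
    rw [pC, if_neg hneg, hf₁def]
    have key : Real.exp (-ηV * y) * Real.exp (ηS * (x - μ - ρ * y))
        = Real.exp (ηS * (x - μ)) * Real.exp (d * y) := by
      rw [← Real.exp_add, ← Real.exp_add]; congr 1; rw [hρr, hddef]; ring
    calc ηV * Real.exp (-ηV * y) * ((1 - α) * (ηS * Real.exp (ηS * (x - μ - ρ * y))))
        = (1 - α) * ηS * ηV * (Real.exp (-ηV * y) * Real.exp (ηS * (x - μ - ρ * y))) := by ring
      _ = C1 * Real.exp (d * y) := by rw [key, hC1def]; ring
  have hEq2 : Set.EqOn (pC ηV ηS α μ ρ x) f₂ (Set.Ici y₀) := by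
    intro y hy
    have hpos : 0 ≤ x - μ - ρ * y := by
      rw [harg y]; exact mul_nonneg hr.le (by simpa using hy)
    rw [pC, if_pos hpos, hf₂def]
    have key : Real.exp (-ηV * y) * Real.exp (-ηS * (x - μ - ρ * y))
        = Real.exp (-(ηS * (x - μ))) * Real.exp (-(e * y)) := by
      rw [← Real.exp_add, ← Real.exp_add]; congr 1; rw [hρr, hedef]; ring
    calc ηV * Real.exp (-ηV * y) * (α * (ηS * Real.exp (-ηS * (x - μ - ρ * y))))
        = α * ηS * ηV * (Real.exp (-ηV * y) * Real.exp (-ηS * (x - μ - ρ * y))) := by ring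
      _ = C2 * Real.exp (-(e * y)) := by rw [key, hC2def]; ring
  have hcont1 : Continuous f₁ := by
    rw [hf₁def]; fun_prop
  have hi1 : IntegrableOn (pC ηV ηS α μ ρ x) (Set.Ioo 0 y₀) :=
    ((hcont1.integrableOn_Ioc).mono_set Set.Ioo_subset_Ioc_self).congr_fun
      hEq1.symm measurableSet_Ioo
  have hi2' : IntegrableOn f₂ (Set.Ici y₀) := by
    rw [integrableOn_Ici_iff_integrableOn_Ioi]
    exact (integrableOn_exp_neg_mul_Ioi he y₀).const_mul C2
  have hi2 : IntegrableOn (pC ηV ηS α μ ρ x) (Set.Ici y₀) :=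
    hi2'.congr_fun hEq2.symm measurableSet_Ici
  have hdisj : Disjoint (Set.Ioo 0 y₀) (Set.Ici y₀) := by
    rw [Set.disjoint_left]
    rintro y ⟨_, h2⟩ h3
    exact absurd (Set.mem_Ici.mp h3) (not_le.mpr h2)
  rw [show Set.Ioi (0:ℝ) = Set.Ioo 0 y₀ ∪ Set.Ici y₀ from (Set.Ioo_union_Ici_eq_Ioi hy₀).symm,
    setIntegral_union hdisj measurableSet_Ici hi1 hi2,
    setIntegral_congr_fun measurableSet_Ioo hEq1,
    setIntegral_congr_fun measurableSet_Ici hEq2]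
  have hv1 : ∫ y in Set.Ioo (0:ℝ) y₀, f₁ y = C1 * ((Real.exp (d * y₀) - 1) / d) := by
    rw [hf₁def]
    simp only []
    rw [← integral_Ioc_eq_integral_Ioo, ← intervalIntegral.integral_of_le hy₀.le,
      intervalIntegral.integral_const_mul, integral_exp_mul_ab d 0 y₀ hd]
    simp [Real.exp_zero]
  have hv2 : ∫ y in Set.Ici y₀, f₂ y = C2 * (Real.exp (-(e * y₀)) / e) := by
    rw [hf₂def]
    simp only []
    rw [integral_Ici_eq_integral_Ioi, integral_const_mul, integral_exp_neg_mul_Ioi he y₀]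
  rw [hv1, hv2]
  -- exponential simplifications
  have e1 : Real.exp (ηS * (x - μ)) * Real.exp (d * y₀) = Real.exp (ηV / r * (x - μ)) := by
    rw [← Real.exp_add]; congr 1
    rw [hddef, hy₀def]; field_simp; ring
  have e2 : Real.exp (-(ηS * (x - μ))) * Real.exp (-(e * y₀)) = Real.exp (ηV / r * (x - μ)) := by
    rw [← Real.exp_add]; congr 1
    rw [hedef, hy₀def]; field_simp; ring
  have expand : C1 * ((Real.exp (d * y₀) - 1) / d) + C2 * (Real.exp (-(e * y₀)) / e)
      = (1 - α) * ηS * ηV / d *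
          (Real.exp (ηS * (x - μ)) * Real.exp (d * y₀) - Real.exp (ηS * (x - μ)))
        + α * ηS * ηV / e *
          (Real.exp (-(ηS * (x - μ))) * Real.exp (-(e * y₀))) := by
    rw [hC1def, hC2def]; ring
  rw [expand, e1, e2]
  have hdd : ηS * r - ηV ≠ 0 := hddef ▸ hd
  have hvd : ηV - ηS * r ≠ 0 := fun h => hdd (by linarith)
  field_simp [hddef, hedef]
  ring

lemma iio_piece_int {β : ℝ} (hβ : 0 < β) (K S₀ k : ℝ) :
    IntegrableOn (fun x => K * Real.exp (β * x) - S₀ * Real.exp ((β + 1) * x)) (Set.Iio k) := by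
  have h1 : IntegrableOn (fun x => K * Real.exp (β * x) - S₀ * Real.exp ((β + 1) * x))
      (Set.Iic k) :=
    ((integrableOn_exp_mul_Iic' hβ k).const_mul K).sub
      ((integrableOn_exp_mul_Iic' (by linarith) k).const_mul S₀)
  exact h1.mono_set Set.Iio_subset_Iic_self

lemma iio_piece_val {β : ℝ} (hβ : 0 < β) (K S₀ k : ℝ) :
    ∫ x in Set.Iio k, (K * Real.exp (β * x) - S₀ * Real.exp ((β + 1) * x))
      = K * Real.exp (β * k) / β - S₀ * Real.exp ((β + 1) * k) / (β + 1) := by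
  have hβ1 : (0:ℝ) < β + 1 := by linarith
  rw [← integral_Iic_eq_integral_Iio,
    integral_sub ((integrableOn_exp_mul_Iic' hβ k).const_mul K)
      ((integrableOn_exp_mul_Iic' hβ1 k).const_mul S₀),
    integral_const_mul, integral_const_mul, integral_exp_mul_Iic' hβ, integral_exp_mul_Iic' hβ1]
  ring

end Helpers

/-- Short-maturity deep-OTM European put coefficient from common jumps in the Kou-type
model, for `k = log(K/S₀) < μ < 0`:
`∫_ℝ ∫₀^∞ (K - S₀ e^x)^+ p^C(x,y) dy dx
  = c_{1L} S₀ e^{(η_V/|ρ| + 1)k}/(η_V/|ρ| + 1) + c_{2L} S₀ e^{(η_S + 1)k}/(η_S + 1)`. -/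

theorem stmt_8 (ηV ηS α μ ρ : ℝ) (hηV : 0 < ηV) (hηS : 0 < ηS)
    (hα : α ∈ Set.Icc (0 : ℝ) 1) (hρ : ρ < 0) (hμ : μ < 0) (hne : ηV ≠ ηS * |ρ|)
    (S₀ K : ℝ) (hK0 : 0 < K) (hK : K < S₀ * Real.exp μ)
    (k : ℝ) (hk : k = Real.log (K / S₀)) :
    ∫ x : ℝ, ∫ y in Set.Ioi (0 : ℝ), max (K - S₀ * Real.exp x) 0 * pC ηV ηS α μ ρ x y
      = (α * (ηS * |ρ| / (ηV + ηS * |ρ|)) * Real.exp (-(ηV / |ρ|) * μ)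
          - (1 - α) * (ηS * |ρ| / (ηV - ηS * |ρ|)) * Real.exp (-(ηV / |ρ|) * μ))
          * (S₀ * Real.exp ((ηV / |ρ| + 1) * k) / (ηV / |ρ| + 1))
        + ((1 - α) * (ηV / (ηV - ηS * |ρ|)) * Real.exp (-ηS * μ))
          * (S₀ * Real.exp ((ηS + 1) * k) / (ηS + 1)) := by
  have hr : (0:ℝ) < -ρ := by linarith
  have hne' : ηV ≠ ηS * (-ρ) := by rwa [abs_of_neg hρ] at hne
  have hS₀ : 0 < S₀ := by
    by_contra h
    push_neg at h
    nlinarith [Real.exp_pos μ]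
  have hKk : K = S₀ * Real.exp k := by
    rw [hk, Real.exp_log (div_pos hK0 hS₀)]
    field_simp
  have hkμ : k < μ := by
    rw [hk]
    rw [Real.log_lt_iff_lt_exp (div_pos hK0 hS₀), div_lt_iff₀ hS₀]
    linarith [hK]
  have ha : (0:ℝ) < ηV / (-ρ) := div_pos hηV hr
  have hd : ηS * (-ρ) - ηV ≠ 0 := fun h => hne' (by linarith)
  have hvd : ηV - ηS * (-ρ) ≠ 0 := fun h => hne' (by linarith)
  have he : (0:ℝ) < ηV + ηS * (-ρ) := by nlinarith
  simp only [abs_of_neg hρ]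
  simp only [MeasureTheory.integral_const_mul]
  have hind : (fun x => max (K - S₀ * Real.exp x) 0 * ∫ y in Set.Ioi (0:ℝ), pC ηV ηS α μ ρ x y)
      = Set.indicator (Set.Iio k) (fun x =>
          ((α * ηS * ηV / (ηV + ηS * (-ρ)) + (1 - α) * ηS * ηV / (ηS * (-ρ) - ηV))
              * Real.exp (-(ηV / -ρ) * μ))
            * (K * Real.exp ((ηV / -ρ) * x) - S₀ * Real.exp ((ηV / -ρ + 1) * x))
          + (((1 - α) * ηS * ηV / (ηV - ηS * (-ρ))) * Real.exp (-ηS * μ))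
            * (K * Real.exp (ηS * x) - S₀ * Real.exp ((ηS + 1) * x))) := by
    funext x
    by_cases hxk : x < k
    · rw [Set.indicator_of_mem (Set.mem_Iio.mpr hxk)]
      have hxμ : x < μ := hxk.trans hkμ
      rw [inner_integral ηV ηS α μ ρ hηV hηS hρ hne' x hxμ]
      have hmax : max (K - S₀ * Real.exp x) 0 = K - S₀ * Real.exp x := by
        apply max_eq_left
        have h1 : Real.exp x < Real.exp k := Real.exp_lt_exp.mpr hxk
        nlinarith
      rw [hmax]
      have g1 : Real.exp (ηV / -ρ * (x - μ))
          = Real.exp (-(ηV / -ρ) * μ) * Real.exp ((ηV / -ρ) * x) := by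
        rw [← Real.exp_add]; congr 1; ring
      have g2 : Real.exp (ηS * (x - μ)) = Real.exp (-ηS * μ) * Real.exp (ηS * x) := by
        rw [← Real.exp_add]; congr 1; ring
      have g3 : Real.exp ((ηV / -ρ + 1) * x) = Real.exp ((ηV / -ρ) * x) * Real.exp x := by
        rw [← Real.exp_add]; congr 1; ring
      have g4 : Real.exp ((ηS + 1) * x) = Real.exp (ηS * x) * Real.exp x := by
        rw [← Real.exp_add]; congr 1; ring
      rw [g1, g2, g3, g4]
      ring
    · rw [Set.indicator_of_notMem (fun h => hxk (Set.mem_Iio.mp h))]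
      have hmax : max (K - S₀ * Real.exp x) 0 = 0 := by
        apply max_eq_right
        have h1 : Real.exp k ≤ Real.exp x := Real.exp_le_exp.mpr (not_lt.mp hxk)
        nlinarith
      rw [hmax, zero_mul]
  rw [hind, integral_indicator measurableSet_Iio,
    integral_add ((iio_piece_int ha K S₀ k).const_mul _) ((iio_piece_int hηS K S₀ k).const_mul _),
    integral_const_mul, integral_const_mul, iio_piece_val ha K S₀ k, iio_piece_val hηS K S₀ k]
  have hKe : ∀ β : ℝ, K * Real.exp (β * k) = S₀ * Real.exp ((β + 1) * k) := by
    intro β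
    rw [hKk, show (β + 1) * k = β * k + k by ring, Real.exp_add]
    ring
  rw [hKe (ηV / -ρ), hKe ηS]
  have hs1 : ηS + 1 ≠ 0 := by positivity
  have hρ0 : ρ ≠ 0 := ne_of_lt hρ
  have hA0 : α * ηS * ηV / (ηV + ηS * -ρ) + (1 - α) * ηS * ηV / (ηS * -ρ - ηV)
      = (α * (ηS * -ρ / (ηV + ηS * -ρ)) - (1 - α) * (ηS * -ρ / (ηV - ηS * -ρ))) * (ηV / -ρ) := by
    rw [show ηS * -ρ - ηV = -(ηV - ηS * -ρ) by ring, div_neg]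
    field_simp [he.ne', hvd, hr.ne']
    ring
  have hB0 : (1 - α) * ηS * ηV / (ηV - ηS * -ρ)
      = ((1 - α) * (ηV / (ηV - ηS * -ρ))) * ηS := by
    field_simp [hvd]
  rw [hA0, hB0]
  set b := ηV / -ρ with hbdef
  have hb : b ≠ 0 := ne_of_gt ha
  have hb1 : b + 1 ≠ 0 := by nlinarith
  clear_value b
  set t1 := ηS * -ρ / (ηV + ηS * -ρ) with ht1
  set t2 := ηS * -ρ / (ηV - ηS * -ρ) with ht2
  set t3 := ηV / (ηV - ηS * -ρ) with ht3
  clear_value t1 t2 t3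
  field_simp
  ring
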